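/- arXiv:2209.01761 — 3 statements merged into one kernel-verified Lean document; each statement's English description precedes it below -/
import Mathlib

section
/- (Eqs. (36)–(38): optimal disentangling unitary gives L_otm = 0) In the quantum autoencoder setup with pure fresh-qubit state ρ_B = |ψ⟩⟨ψ| and input state ρ_in = Σ_{i=1}^r p_i |p_i⟩⟨p_i|, suppose the unitary U satisfies U ρ_in U† = ρ_A ⊗ |ψ⟩⟨ψ| and U |p_i⟩⟨p_i| U† = ρ_A^{(i)} ⊗ |ψ⟩⟨ψ| for all 1 ≤ i ≤ r, where ρ_A = Tr_B[U ρ_in U†] and ρ_A^{(i)} = Tr_B[U |p_i⟩⟨p_i| U†]. Then C(ρ_A^{(i)}, ρ_A) = −ln p_i for all i, and consequently L_otm = −ln( Σ_{i=1}^r e^{−C(Φ(|p_i⟩⟨p_i|), ρ_out)} ) = 0. -/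
open scoped Kronecker BigOperators ComplexOrder

namespace QCE

variable {ι : Type*} [Fintype ι] [DecidableEq ι]

/-- Apply a real function to a matrix via the spectral decomposition (functional calculus on
the eigenvalues); returns `0` if the matrix is not Hermitian. -/
noncomputable def matFun (A : Matrix ι ι ℂ) (f : ℝ → ℝ) : Matrix ι ι ℂ :=
  if h : A.IsHermitian then h.cfc f else 0

/-- Matrix logarithm taken on the support (eigenvalue `0` is sent to `0`,
since `Real.log 0 = 0`). -/
noncomputable def matLog (A : Matrix ι ι ℂ) : Matrix ι ι ℂ :=
  matFun A Real.log

/-- Quantum cross entropy `C(ρ₁, ρ₂) = -Tr[ρ₁ ln ρ₂]`, with the logarithm on the support. -/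
noncomputable def crossEnt (ρ₁ ρ₂ : Matrix ι ι ℂ) : ℝ :=
  -((ρ₁ * matLog ρ₂).trace.re)

/-- Von Neumann entropy `S(ρ) = -Tr[ρ ln ρ]`. -/
noncomputable def vnEntropy (ρ : Matrix ι ι ℂ) : ℝ :=
  crossEnt ρ ρ

/-- A density matrix: positive semidefinite with unit trace. -/
def IsDensityMatrix (ρ : Matrix ι ι ℂ) : Prop :=
  ρ.PosSemidef ∧ ρ.trace = 1

/-- The rank-one projector `|v⟩⟨v|`. -/
noncomputable def outer (v : ι → ℂ) : Matrix ι ι ℂ :=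
  Matrix.vecMulVec v (star v)

/-- An orthonormal family of vectors. -/
def OrthonormalFam {r : ℕ} (v : Fin r → ι → ℂ) : Prop :=
  ∀ i j, (∑ a, star (v i a) * v j a) = if i = j then (1 : ℂ) else 0

/-- The Choi matrix of a linear map on matrices. -/
noncomputable def choi {κ : Type*} [Fintype κ] [DecidableEq κ]
    (Φ : Matrix ι ι ℂ →ₗ[ℂ] Matrix κ κ ℂ) : Matrix (ι × κ) (ι × κ) ℂ :=
  ∑ i : ι, ∑ j : ι, (Matrix.single i j (1 : ℂ)) ⊗ₖ (Φ (Matrix.single i j 1))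

/-- A quantum channel: completely positive (positive semidefinite Choi matrix, by Choi's
theorem) and trace preserving. -/
def IsCPTP {κ : Type*} [Fintype κ] [DecidableEq κ]
    (Φ : Matrix ι ι ℂ →ₗ[ℂ] Matrix κ κ ℂ) : Prop :=
  (choi Φ).PosSemidef ∧ ∀ ρ : Matrix ι ι ℂ, (Φ ρ).trace = ρ.trace

/-- Partial trace over the second tensor factor. -/
noncomputable def ptraceB {dA dB : ℕ}
    (ρ : Matrix (Fin dA × Fin dB) (Fin dA × Fin dB) ℂ) : Matrix (Fin dA) (Fin dA) ℂ :=
  Matrix.of fun i j => ∑ k : Fin dB, ρ (i, k) (j, k)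

/-- Partial trace over the first tensor factor. -/
noncomputable def ptraceA {dA dB : ℕ}
    (ρ : Matrix (Fin dA × Fin dB) (Fin dA × Fin dB) ℂ) : Matrix (Fin dB) (Fin dB) ℂ :=
  Matrix.of fun i j => ∑ k : Fin dA, ρ (k, i) (k, j)


/-- Matrix square root via the spectral decomposition. -/
noncomputable def matSqrt (A : Matrix ι ι ℂ) : Matrix ι ι ℂ :=
  matFun A Real.sqrt

/-- Quantum fidelity `F[ρ,σ] = (Tr[√(√ρ σ √ρ)])²`. -/
noncomputable def fidelity (ρ σ : Matrix ι ι ℂ) : ℝ :=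
  ((matSqrt (matSqrt ρ * σ * matSqrt ρ)).trace.re) ^ 2




section Aux
open Matrix
set_option linter.unusedSectionVars false

lemma matFun_mulVec {A : Matrix ι ι ℂ} (hA : A.IsHermitian) (f : ℝ → ℝ) {μ : ℝ} {u : ι → ℂ}
    (hu : A *ᵥ u = (μ : ℂ) • u) :
    matFun A f *ᵥ u = ((f μ : ℝ) : ℂ) • u := by
  set V : Matrix ι ι ℂ := (hA.eigenvectorUnitary : Matrix ι ι ℂ) with hV
  have hVsV : star V * V = 1 := Unitary.coe_star_mul_self _
  have hVVs : V * star V = 1 := Unitary.coe_mul_star_self _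
  set c : ι → ℂ := star V *ᵥ u with hc
  have hdiag : diagonal (RCLike.ofReal ∘ hA.eigenvalues) *ᵥ c = (μ : ℂ) • c := by
    have h1 : star V *ᵥ (A *ᵥ u) = (μ : ℂ) • c := by rw [hu]; simp [hc, mulVec_smul]
    have h2 : star V *ᵥ (A *ᵥ u) = diagonal (RCLike.ofReal ∘ hA.eigenvalues) *ᵥ c := by
      conv_lhs => rw [hA.spectral_theorem]
      simp only [Unitary.conjStarAlgAut_apply, Unitary.coe_star]
      simp only [← hV, mulVec_mulVec, hc, ← mul_assoc, hVsV, one_mul]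
    rw [← h2, h1]
  have key : ∀ k, ((f (hA.eigenvalues k) : ℝ) : ℂ) * c k = ((f μ : ℝ) : ℂ) * c k := by
    intro k
    rcases eq_or_ne (c k) 0 with h | h
    · simp [h]
    · have h1 : ((hA.eigenvalues k : ℝ) : ℂ) * c k = (μ : ℂ) * c k := by
        have := congrFun hdiag k
        simpa [mulVec_diagonal] using this
      have h2 : hA.eigenvalues k = μ := by
        have := mul_right_cancel₀ h h1
        exact_mod_cast this
      rw [h2]
  have hdf : diagonal (RCLike.ofReal ∘ f ∘ hA.eigenvalues) *ᵥ c = ((f μ : ℝ) : ℂ) • c := by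
    ext k
    simpa [mulVec_diagonal] using key k
  rw [matFun, dif_pos hA, Matrix.IsHermitian.cfc]
  simp only [Unitary.conjStarAlgAut_apply, Unitary.coe_star]
  rw [← mulVec_mulVec, ← mulVec_mulVec, ← hV, ← hc, hdf, mulVec_smul]
  rw [mulVec_mulVec, hVVs, one_mulVec]

lemma outer_mulVec (v x : ι → ℂ) : outer v *ᵥ x = (star v ⬝ᵥ x) • v := by
  ext i
  simp [outer, mulVec, vecMulVec_apply, dotProduct, Finset.mul_sum, mul_comm, mul_left_comm]

lemma outer_isHermitian (v : ι → ℂ) : (outer v).IsHermitian := by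
  ext i j
  simp [outer, vecMulVec_apply, conjTranspose_apply, mul_comm]

lemma sum_mulVec' {r : ℕ} (A : Fin r → Matrix ι ι ℂ) (x : ι → ℂ) :
    (∑ i, A i) *ᵥ x = ∑ i, A i *ᵥ x := by
  ext k
  simp only [mulVec, dotProduct, Finset.sum_apply, Finset.sum_mul, Matrix.sum_apply]
  rw [Finset.sum_comm]

lemma sum_isHermitian {r : ℕ} (p : Fin r → ℝ) (u : Fin r → ι → ℂ) :
    (∑ i, (p i : ℂ) • outer (u i)).IsHermitian := by
  unfold Matrix.IsHermitian
  rw [conjTranspose_sum]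
  refine Finset.sum_congr rfl fun i _ => ?_
  rw [conjTranspose_smul, (outer_isHermitian (u i)).eq]
  congr 1
  simp [Complex.ext_iff]

lemma trace_outer_mul (v : ι → ℂ) (L : Matrix ι ι ℂ) :
    (outer v * L).trace = star v ⬝ᵥ (L *ᵥ v) := by
  rw [Matrix.trace_mul_comm]
  simp only [trace, diag, mul_apply, outer, vecMulVec_apply, dotProduct, mulVec,
    Finset.mul_sum, Pi.star_apply]
  refine Finset.sum_congr rfl fun y _ => ?_
  refine Finset.sum_congr rfl fun x _ => ?_
  ring

lemma crossEnt_outer {r : ℕ} (p : Fin r → ℝ) (hp : ∀ i, 0 < p i)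
    (u : Fin r → ι → ℂ) (hu : OrthonormalFam u) (j : Fin r) :
    crossEnt (outer (u j)) (∑ i, (p i : ℂ) • outer (u i)) = -Real.log (p j) := by
  set ρ : Matrix ι ι ℂ := ∑ i, (p i : ℂ) • outer (u i) with hρ
  have hH : ρ.IsHermitian := sum_isHermitian p u
  have heig : ρ *ᵥ u j = ((p j : ℝ) : ℂ) • u j := by
    rw [hρ, sum_mulVec']
    have : ∀ i, ((p i : ℂ) • outer (u i)) *ᵥ u j
        = (if i = j then (p i : ℂ) else 0) • u i := by
      intro i
      rw [smul_mulVec, outer_mulVec]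
      have : star (u i) ⬝ᵥ u j = if i = j then (1:ℂ) else 0 := by
        simpa [dotProduct] using hu i j
      rw [this]
      by_cases h : i = j <;> simp [h]
    simp only [this]
    rw [Finset.sum_eq_single j] <;> simp +contextual
  have hlog : matLog ρ *ᵥ u j = ((Real.log (p j) : ℝ) : ℂ) • u j :=
    matFun_mulVec hH Real.log heig
  have hnorm : star (u j) ⬝ᵥ u j = 1 := by simpa [dotProduct] using hu j j
  rw [crossEnt, trace_outer_mul, hlog, dotProduct_smul, hnorm]
  simp

lemma mul_outer_mul (M : Matrix ι ι ℂ) (v : ι → ℂ) :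
    M * outer v * M.conjTranspose = outer (M *ᵥ v) := by
  ext x y
  simp only [mul_apply, outer, vecMulVec_apply, conjTranspose_apply, mulVec, dotProduct,
    Pi.star_apply, star_sum, star_mul']
  rw [Finset.sum_mul_sum]
  rw [Finset.sum_comm]
  refine Finset.sum_congr rfl fun z _ => ?_
  rw [Finset.sum_mul]
  refine Finset.sum_congr rfl fun t _ => ?_
  ring

lemma unitary_dot (U : Matrix ι ι ℂ) (hU : U.conjTranspose * U = 1) (x y : ι → ℂ) :
    star (U *ᵥ x) ⬝ᵥ (U *ᵥ y) = star x ⬝ᵥ y := by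
  rw [star_mulVec, ← dotProduct_mulVec, mulVec_mulVec, hU, one_mulVec]

end Aux

open Matrix in
/-- **Eqs. (36)–(38)** (Optimal disentangling unitary gives `L_otm = 0`).
If `U ρin U† = ρ_A ⊗ |ψ⟩⟨ψ|` and `U |pᵢ⟩⟨pᵢ| U† = ρ_A⁽ⁱ⁾ ⊗ |ψ⟩⟨ψ|` for all `i`, then
`C(ρ_A⁽ⁱ⁾, ρ_A) = -ln pᵢ` for all `i`, and consequently `L_otm = 0`. -/
theorem qae_optimal_unitary_Lotm_zero
    {dA dB r : ℕ}
    (U : Matrix (Fin dA × Fin dB) (Fin dA × Fin dB) ℂ)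
    (hU : U * U.conjTranspose = 1 ∧ U.conjTranspose * U = 1)
    (ψ : Fin dB → ℂ) (hψ : ∑ a, star (ψ a) * ψ a = 1)
    (p : Fin r → ℝ) (hp : ∀ i, 0 < p i) (hp1 : ∑ i, p i = 1)
    (v : Fin r → (Fin dA × Fin dB) → ℂ) (hv : OrthonormalFam v)
    (ρin : Matrix (Fin dA × Fin dB) (Fin dA × Fin dB) ℂ)
    (hρin : ρin = ∑ i, (p i : ℂ) • outer (v i))
    (ρA : Matrix (Fin dA) (Fin dA) ℂ) (hρA : ρA = ptraceB (U * ρin * U.conjTranspose))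
    (ρAi : Fin r → Matrix (Fin dA) (Fin dA) ℂ)
    (hρAi : ∀ i, ρAi i = ptraceB (U * outer (v i) * U.conjTranspose))
    (ρout : Matrix (Fin dA × Fin dB) (Fin dA × Fin dB) ℂ)
    (hρout : ρout = U.conjTranspose * (ρA ⊗ₖ outer ψ) * U)
    (Φi : Fin r → Matrix (Fin dA × Fin dB) (Fin dA × Fin dB) ℂ)
    (hΦi : ∀ i, Φi i = U.conjTranspose * ((ρAi i) ⊗ₖ outer ψ) * U)
    (hopt : U * ρin * U.conjTranspose = ρA ⊗ₖ outer ψ)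
    (hopti : ∀ i, U * outer (v i) * U.conjTranspose = (ρAi i) ⊗ₖ outer ψ) :
    (∀ i, crossEnt (ρAi i) ρA = -Real.log (p i)) ∧
      -Real.log (∑ i, Real.exp (-(crossEnt (Φi i) ρout))) = 0 := by
  obtain ⟨hU1, hU2⟩ := hU
  -- the (normalized) image vectors
  set w : Fin r → (Fin dA × Fin dB) → ℂ := fun i => U *ᵥ v i with hwdef
  have hψ' : ∑ b, ψ b * star (ψ b) = 1 := by
    rw [← hψ]; exact Finset.sum_congr rfl fun b _ => mul_comm _ _
  have hw : OrthonormalFam w := by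
    intro i j
    have : (∑ a, star (w i a) * w j a) = star (w i) ⬝ᵥ w j := by
      simp [dotProduct]
    rw [this, hwdef, unitary_dot U hU2]
    simpa [dotProduct] using hv i j
  have houter : ∀ i, outer (w i) = (ρAi i) ⊗ₖ outer ψ := by
    intro i
    rw [hwdef, ← mul_outer_mul, hopti i]
  -- entrywise consequence of hopti
  have Ei : ∀ (i : Fin r) (x y : Fin dA) (b c : Fin dB),
      w i (x, b) * star (w i (y, c)) = ρAi i x y * (ψ b * star (ψ c)) := by
    intro i x y b c
    have := congrFun (congrFun (houter i) (x, b)) (y, c)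
    simpa [outer, vecMulVec_apply, kroneckerMap_apply] using this
  -- trace of ρAi is 1
  have hwnorm : ∀ i, (∑ x : Fin dA, ∑ b : Fin dB, w i (x, b) * star (w i (x, b))) = 1 := by
    intro i
    have h := hw i i
    rw [if_pos rfl] at h
    rw [← h, Fintype.sum_prod_type]
    exact Finset.sum_congr rfl fun x _ => Finset.sum_congr rfl fun b _ => mul_comm _ _
  have htrρ : ∀ i, (∑ x : Fin dA, ρAi i x x) = 1 := by
    intro i
    have h := hwnorm i
    calc (∑ x : Fin dA, ρAi i x x)
        = (∑ x : Fin dA, ρAi i x x) * (∑ b, ψ b * star (ψ b)) := by rw [hψ', mul_one]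
      _ = ∑ x : Fin dA, ∑ b : Fin dB, ρAi i x x * (ψ b * star (ψ b)) := by
          rw [Finset.sum_mul]
          exact Finset.sum_congr rfl fun x _ => Finset.mul_sum _ _ _
      _ = ∑ x : Fin dA, ∑ b : Fin dB, w i (x, b) * star (w i (x, b)) := by
          exact Finset.sum_congr rfl fun x _ => Finset.sum_congr rfl fun b _ => (Ei i x x b b).symm
      _ = 1 := h
  -- the reduced vectors
  set a : Fin r → Fin dA → ℂ := fun i x => ∑ b, w i (x, b) * star (ψ b) with hadef
  have hE : ∀ i, ρAi i = outer (a i) := by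
    intro i
    ext x y
    simp only [outer, vecMulVec_apply, Pi.star_apply]
    symm
    calc a i x * star (a i y)
        = (∑ b, w i (x, b) * star (ψ b)) * ∑ c, star (w i (y, c)) * ψ c := by
          rw [hadef]; congr 1
          simp [star_sum]
      _ = ∑ b, ∑ c, (w i (x, b) * star (w i (y, c))) * (star (ψ b) * ψ c) := by
          rw [Finset.sum_mul_sum]
          exact Finset.sum_congr rfl fun b _ => Finset.sum_congr rfl fun c _ => by ring
      _ = ∑ b, ∑ c, ρAi i x y * ((ψ b * star (ψ b)) * (star (ψ c) * ψ c)) := by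
          refine Finset.sum_congr rfl fun b _ => Finset.sum_congr rfl fun c _ => ?_
          rw [Ei i x y b c]; ring
      _ = ρAi i x y * ((∑ b, ψ b * star (ψ b)) * (∑ c, star (ψ c) * ψ c)) := by
          rw [Finset.sum_mul_sum, Finset.mul_sum]
          refine Finset.sum_congr rfl fun b _ => ?_
          rw [Finset.mul_sum]
      _ = ρAi i x y := by rw [hψ', hψ, mul_one, mul_one]
  have ha2 : ∀ i, (∑ x, star (a i x) * a i x) = 1 := by
    intro i
    have : ∀ x, star (a i x) * a i x = ρAi i x x := by
      intro x
      have := congrFun (congrFun (hE i) x) x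
      simp only [outer, vecMulVec_apply, Pi.star_apply] at this
      rw [this]; ring
    simp only [this]
    exact htrρ i
  -- w i = a i ⊗ ψ
  have hF : ∀ i x b, w i (x, b) = a i x * ψ b := by
    intro i x b
    have h1 : w i (x, b)
        = ∑ y : Fin dA, ∑ c : Fin dB, (w i (x, b) * star (w i (y, c))) * w i (y, c) := by
      have h2 : ∀ y c, (w i (x, b) * star (w i (y, c))) * w i (y, c)
          = w i (x, b) * (w i (y, c) * star (w i (y, c))) := fun y c => by ring
      simp only [h2, ← Finset.mul_sum]
      rw [hwnorm i, mul_one]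
    rw [h1]
    calc ∑ y : Fin dA, ∑ c : Fin dB, (w i (x, b) * star (w i (y, c))) * w i (y, c)
        = ∑ y : Fin dA, ∑ c : Fin dB, (ρAi i x y * (ψ b * star (ψ c))) * w i (y, c) := by
          refine Finset.sum_congr rfl fun y _ => Finset.sum_congr rfl fun c _ => ?_
          rw [Ei i x y b c]
      _ = ψ b * ∑ y : Fin dA, ρAi i x y * a i y := by
          rw [Finset.mul_sum]
          refine Finset.sum_congr rfl fun y _ => ?_
          rw [hadef, Finset.mul_sum, Finset.mul_sum]
          refine Finset.sum_congr rfl fun c _ => ?_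
          ring
      _ = ψ b * ∑ y : Fin dA, (a i x * (star (a i y) * a i y)) := by
          congr 1
          refine Finset.sum_congr rfl fun y _ => ?_
          have := congrFun (congrFun (hE i) x) y
          simp only [outer, vecMulVec_apply, Pi.star_apply] at this
          rw [this]; ring
      _ = a i x * ψ b := by
          rw [← Finset.mul_sum, ha2 i, mul_one]; ring
  -- orthonormality of a
  have hG : OrthonormalFam a := by
    intro i j
    have h := hw i j
    rw [Fintype.sum_prod_type] at h
    calc (∑ x, star (a i x) * a j x)
        = (∑ x, star (a i x) * a j x) * (∑ b, star (ψ b) * ψ b) := by rw [hψ, mul_one]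
      _ = ∑ x, ∑ b, star (a i x * ψ b) * (a j x * ψ b) := by
          rw [Finset.sum_mul_sum]
          refine Finset.sum_congr rfl fun x _ => Finset.sum_congr rfl fun b _ => ?_
          simp only [star_mul']
          ring
      _ = if i = j then 1 else 0 := by
          rw [← h]
          exact Finset.sum_congr rfl fun x _ => Finset.sum_congr rfl fun b _ => by
            rw [hF i x b, hF j x b]
  -- ρA as a mixture of outer (a i)
  have hptr : ∀ i, ptraceB (outer (w i)) = outer (a i) := by
    intro i
    ext x y
    simp only [ptraceB, of_apply, outer, vecMulVec_apply, Pi.star_apply]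
    calc (∑ b, w i (x, b) * star (w i (y, b)))
        = ∑ b, (a i x * star (a i y)) * (ψ b * star (ψ b)) := by
          refine Finset.sum_congr rfl fun b _ => ?_
          rw [hF i x b, hF i y b]
          simp only [star_mul']
          ring
      _ = a i x * star (a i y) := by rw [← Finset.mul_sum, hψ', mul_one]
  have hsum : U * ρin * U.conjTranspose = ∑ i, (p i : ℂ) • outer (w i) := by
    rw [hρin, Matrix.mul_sum, Finset.sum_mul]
    refine Finset.sum_congr rfl fun i _ => ?_
    rw [Matrix.mul_smul, Matrix.smul_mul, mul_outer_mul]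
  have hρA' : ρA = ∑ i, (p i : ℂ) • outer (a i) := by
    rw [hρA, hsum]
    ext x y
    simp only [ptraceB, of_apply, Matrix.sum_apply, Matrix.smul_apply, smul_eq_mul,
      Finset.mul_sum]
    rw [Finset.sum_comm]
    refine Finset.sum_congr rfl fun i _ => ?_
    rw [← Finset.mul_sum]
    congr 1
    have := congrFun (congrFun (hptr i) x) y
    simpa [ptraceB] using this
  -- first conjunct
  have hc1 : ∀ i, crossEnt (ρAi i) ρA = -Real.log (p i) := by
    intro i
    rw [hE i, hρA']
    exact crossEnt_outer p hp a hG i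
  refine ⟨hc1, ?_⟩
  -- second conjunct
  have hΦ : ∀ i, Φi i = outer (v i) := by
    intro i
    rw [hΦi i, ← hopti i]
    calc U.conjTranspose * (U * outer (v i) * U.conjTranspose) * U
        = (U.conjTranspose * U) * outer (v i) * (U.conjTranspose * U) := by
          simp only [Matrix.mul_assoc]
      _ = outer (v i) := by rw [hU2, Matrix.one_mul, Matrix.mul_one]
  have hout : ρout = ρin := by
    rw [hρout, ← hopt]
    calc U.conjTranspose * (U * ρin * U.conjTranspose) * U
        = (U.conjTranspose * U) * ρin * (U.conjTranspose * U) := by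
          simp only [Matrix.mul_assoc]
      _ = ρin := by rw [hU2, Matrix.one_mul, Matrix.mul_one]
  have hc2 : ∀ i, crossEnt (Φi i) ρout = -Real.log (p i) := by
    intro i
    rw [hΦ i, hout, hρin]
    exact crossEnt_outer p hp v hv i
  have : (∑ i, Real.exp (-(crossEnt (Φi i) ρout))) = 1 := by
    rw [← hp1]
    refine Finset.sum_congr rfl fun i _ => ?_
    rw [hc2 i, neg_neg, Real.exp_log (hp i)]
  rw [this, Real.log_one, neg_zero]


end QCE
end

section
/- (Appendix A: fidelity bound from projection onto a pure state) Let ρ be a density matrix on a d-dimensional complex Hilbert space with d ≥ 1 and let |ψ⟩ be a unit vector. Then the fidelity with the maximally mixed state satisfies √( F[ρ, 𝟙/d] ) ≤ √( ⟨ψ|ρ|ψ⟩ / d ) + √( (1 − ⟨ψ|ρ|ψ⟩)(1 − 1/d) ). Equivalently, writing 𝒞 = 1 − ⟨ψ|ρ|ψ⟩, F[ρ, 𝟙/d] ≤ ( √((1−𝒞)/d) + √(𝒞(1 − 1/d)) )². -/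
open scoped Kronecker BigOperators ComplexOrder

namespace QCE

variable {ι : Type*} [Fintype ι] [DecidableEq ι]

noncomputable def _root_.Matrix.PosSemidef.sqrt {n : Type*} [Fintype n] [DecidableEq n]
    {A : Matrix n n ℂ} (hA : A.PosSemidef) : Matrix n n ℂ :=
  hA.1.cfc Real.sqrt

theorem _root_.Matrix.PosSemidef.sqrt_mul_self {n : Type*} [Fintype n] [DecidableEq n]
    {A : Matrix n n ℂ} (hA : A.PosSemidef) : hA.sqrt * hA.sqrt = A := by
  rw [Matrix.PosSemidef.sqrt, ← hA.1.cfc_eq, ← cfc_mul Real.sqrt Real.sqrt A]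
  conv_rhs => rw [← cfc_id ℝ A hA.1.isSelfAdjoint]
  refine cfc_congr fun x hx => ?_
  have : 0 ≤ x := by
    rw [hA.1.spectrum_real_eq_range_eigenvalues] at hx
    obtain ⟨i, rfl⟩ := hx
    exact hA.eigenvalues_nonneg i
  simp [Real.mul_self_sqrt this]

-- auxiliary
lemma matSqrt_eq_sqrt {A : Matrix ι ι ℂ} (hA : A.PosSemidef) :
    matSqrt A = hA.sqrt := by
  rw [matSqrt, matFun, dif_pos hA.1]
  rfl

open Matrix in
lemma trace_conj_diag {d : ℕ} (U : Matrix (Fin d) (Fin d) ℂ) (hU : star U * U = 1)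
    (v : Fin d → ℂ) : (U * Matrix.diagonal v * star U).trace = ∑ i, v i := by
  rw [Matrix.trace_mul_cycle, hU, Matrix.one_mul, Matrix.trace_diagonal]

lemma key_cs {d : ℕ} (μ t : Fin d → ℝ) (hμ : ∀ i, 0 ≤ μ i) (ht0 : ∀ i, 0 ≤ t i)
    (ht1 : ∀ i, t i ≤ 1) :
    ∑ i, Real.sqrt (μ i) ≤
      Real.sqrt (∑ i, μ i * t i) * Real.sqrt (∑ i, t i) +
        Real.sqrt (∑ i, μ i * (1 - t i)) * Real.sqrt (∑ i, (1 - t i)) := by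
  have h1 : ∀ i, Real.sqrt (μ i) =
      Real.sqrt (μ i * t i) * Real.sqrt (t i) +
        Real.sqrt (μ i * (1 - t i)) * Real.sqrt (1 - t i) := by
    intro i
    rw [Real.sqrt_mul (hμ i), Real.sqrt_mul (hμ i), mul_assoc, mul_assoc,
      Real.mul_self_sqrt (ht0 i), Real.mul_self_sqrt (by linarith [ht1 i]), ← mul_add]
    simp
  calc ∑ i, Real.sqrt (μ i)
      = ∑ i, (Real.sqrt (μ i * t i) * Real.sqrt (t i)) +
          ∑ i, (Real.sqrt (μ i * (1 - t i)) * Real.sqrt (1 - t i)) := by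
        rw [← Finset.sum_add_distrib]; exact Finset.sum_congr rfl fun i _ => h1 i
    _ ≤ _ := by
        refine add_le_add ?_ ?_
        · exact Real.sum_sqrt_mul_sqrt_le _ (fun i => mul_nonneg (hμ i) (ht0 i)) ht0
        · exact Real.sum_sqrt_mul_sqrt_le _
            (fun i => mul_nonneg (hμ i) (by linarith [ht1 i])) (fun i => by linarith [ht1 i])

/-- **Appendix A** (Fidelity bound from projection onto a pure state).
For a density matrix `ρ` and a unit vector `|ψ⟩`,
`√F[ρ, 𝟙/d] ≤ √(⟨ψ|ρ|ψ⟩/d) + √((1 - ⟨ψ|ρ|ψ⟩)(1 - 1/d))`; equivalently, with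
`𝒞 = 1 - ⟨ψ|ρ|ψ⟩`, `F[ρ, 𝟙/d] ≤ (√((1-𝒞)/d) + √(𝒞(1 - 1/d)))²`. -/
theorem fidelity_maximally_mixed_projection_bound
    {d : ℕ} (hd : 1 ≤ d) (ρ : Matrix (Fin d) (Fin d) ℂ) (hρ : IsDensityMatrix ρ)
    (ψ : Fin d → ℂ) (hψ : ∑ a, star (ψ a) * ψ a = 1)
    (w : ℝ) (hw : w = (∑ a, ∑ b, star (ψ a) * ρ a b * ψ b).re)
    (𝒞 : ℝ) (h𝒞 : 𝒞 = 1 - w) :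
    Real.sqrt (fidelity ρ (((d : ℂ))⁻¹ • 1))
        ≤ Real.sqrt (w / d) + Real.sqrt ((1 - w) * (1 - 1 / (d : ℝ))) ∧
      fidelity ρ (((d : ℂ))⁻¹ • 1)
        ≤ (Real.sqrt ((1 - 𝒞) / d) + Real.sqrt (𝒞 * (1 - 1 / (d : ℝ)))) ^ 2 := by
  obtain ⟨hpsd, htr⟩ := hρ
  have hdR : (0:ℝ) < (d:ℝ) := by exact_mod_cast hd
  have hdne : (d:ℝ) ≠ 0 := ne_of_gt hdR
  have hcinv : ((d:ℂ))⁻¹ = (((d:ℝ)⁻¹ : ℝ) : ℂ) := by push_cast; ring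
  have hc0 : (0:ℂ) ≤ (d:ℂ)⁻¹ := by
    rw [hcinv]; exact_mod_cast inv_nonneg.mpr (Nat.cast_nonneg d)
  set σ : Matrix (Fin d) (Fin d) ℂ := ((d:ℂ)⁻¹) • ρ with hσ
  -- step 1 : the inner matrix equals σ
  have hsq : matSqrt ρ * (((d:ℂ))⁻¹ • 1) * matSqrt ρ = σ := by
    rw [matSqrt_eq_sqrt hpsd, mul_smul_comm, mul_one, smul_mul_assoc, hpsd.sqrt_mul_self]
  have hA : σ.PosSemidef := by
    constructor
    · rw [Matrix.IsHermitian, hσ, Matrix.conjTranspose_smul, hpsd.1.eq]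
      congr 1
      simp
    · intro x
      exact (hpsd.smul hc0).2 x
  set V : Matrix (Fin d) (Fin d) ℂ := (hA.1.eigenvectorUnitary : Matrix (Fin d) (Fin d) ℂ)
    with hV
  have hVV : star V * V = 1 := Matrix.mem_unitaryGroup_iff'.mp hA.1.eigenvectorUnitary.2
  have hVV' : V * star V = 1 := Matrix.mem_unitaryGroup_iff.mp hA.1.eigenvectorUnitary.2
  set μ : Fin d → ℝ := hA.1.eigenvalues with hμdef
  have hμ0 : ∀ i, 0 ≤ μ i := hA.eigenvalues_nonneg
  set cvec : Fin d → ℂ := Matrix.mulVec (star V) ψ with hcvec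
  have hstarc : star cvec = Matrix.vecMul (star ψ) V := by
    rw [hcvec, Matrix.star_mulVec, Matrix.star_eq_conjTranspose,
      Matrix.conjTranspose_conjTranspose]
  set t : Fin d → ℝ := fun k => Complex.normSq (cvec k) with htdef
  have hterm : ∀ k, star (cvec k) * cvec k = ((t k : ℝ) : ℂ) := by
    intro k
    rw [htdef]
    simp only [Complex.star_def]
    rw [mul_comm, Complex.mul_conj]
  -- sum of t equals 1
  have hnorm : ∑ k, star (cvec k) * cvec k = 1 := by
    have : ∑ k, star (cvec k) * cvec k = dotProduct (star cvec) cvec := rfl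
    rw [this, hstarc, hcvec, Matrix.dotProduct_mulVec, Matrix.vecMul_vecMul, hVV',
      Matrix.vecMul_one]
    simpa [dotProduct] using hψ
  have htsum : ∑ k, t k = 1 := by
    have := hnorm
    simp_rw [hterm] at this
    exact_mod_cast (by exact_mod_cast this : ((∑ k, t k : ℝ) : ℂ) = ((1:ℝ) : ℂ))
  have ht0 : ∀ k, 0 ≤ t k := fun k => Complex.normSq_nonneg _
  have ht1 : ∀ k, t k ≤ 1 := by
    intro k
    rw [← htsum]
    exact Finset.single_le_sum (fun i _ => ht0 i) (Finset.mem_univ k)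
  -- spectral expansion of ⟨ψ|σψ⟩
  have hexp : dotProduct (star ψ) (Matrix.mulVec σ ψ) = ∑ k, ((μ k : ℝ) : ℂ) * (star (cvec k) * cvec k) := by
    conv_lhs => rw [hA.1.spectral_theorem, Unitary.conjStarAlgAut_apply]
    rw [← Matrix.mulVec_mulVec, ← Matrix.mulVec_mulVec, Matrix.dotProduct_mulVec (star ψ),
      ← hstarc]
    simp only [dotProduct, Matrix.mulVec_diagonal, Function.comp_apply]
    refine Finset.sum_congr rfl fun k _ => ?_
    show star (cvec k) * (((μ k : ℝ) : ℂ) * cvec k) = ((μ k : ℝ) : ℂ) * (star (cvec k) * cvec k)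
    ring
  -- value of ⟨ψ|σψ⟩ in terms of w
  have hρψ : dotProduct (star ψ) (Matrix.mulVec ρ ψ) = ∑ a, ∑ b, star (ψ a) * ρ a b * ψ b := by
    simp [dotProduct, Matrix.mulVec, Finset.mul_sum, mul_assoc]
  have hσψ : dotProduct (star ψ) (Matrix.mulVec σ ψ)
      = (((d:ℝ)⁻¹ : ℝ) : ℂ) * (∑ a, ∑ b, star (ψ a) * ρ a b * ψ b) := by
    rw [hσ, Matrix.smul_mulVec, dotProduct_smul, smul_eq_mul, hρψ, hcinv]
  have hμt : ∑ k, μ k * t k = (d:ℝ)⁻¹ * w := by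
    have hre : (dotProduct (star ψ) (Matrix.mulVec σ ψ)).re = (d:ℝ)⁻¹ * w := by
      rw [hσψ, hw]
      simp [Complex.re_ofReal_mul]
    rw [hexp] at hre
    rw [← hre, Complex.re_sum]
    refine Finset.sum_congr rfl fun k _ => ?_
    rw [hterm k, ← Complex.ofReal_mul]
    simp
  -- sum of eigenvalues
  have hμsum : ∑ k, μ k = (d:ℝ)⁻¹ := by
    have h1 : σ.trace = ∑ k, ((μ k : ℝ) : ℂ) := by
      conv_lhs => rw [hA.1.spectral_theorem]
      exact trace_conj_diag V hVV _
    have h2 : σ.trace = (((d:ℝ)⁻¹ : ℝ) : ℂ) := by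
      rw [hσ, Matrix.trace_smul, htr, smul_eq_mul, mul_one, hcinv]
    rw [h2] at h1
    exact_mod_cast (by exact_mod_cast h1.symm : ((∑ k, μ k : ℝ) : ℂ) = (((d:ℝ)⁻¹ : ℝ) : ℂ))
  -- fidelity value
  have hfid : fidelity ρ (((d : ℂ))⁻¹ • 1) = (∑ k, Real.sqrt (μ k)) ^ 2 := by
    rw [fidelity, hsq, matSqrt_eq_sqrt hA]
    have : hA.sqrt = V * Matrix.diagonal (fun k => ((Real.sqrt (μ k) : ℝ) : ℂ)) * star V := by
      rw [Matrix.PosSemidef.sqrt]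
      rfl
    rw [this, trace_conj_diag V hVV, ← Complex.ofReal_sum]
    simp
  -- main bound
  have hkey : ∑ k, Real.sqrt (μ k) ≤ Real.sqrt (w / d) + Real.sqrt ((1 - w) * (1 - 1/(d:ℝ))) := by
    have h := key_cs μ t hμ0 ht0 ht1
    have e1 : ∑ i, μ i * t i = w / d := by rw [hμt]; ring
    have e2 : (∑ i, t i) = 1 := htsum
    have e3 : ∑ i, μ i * (1 - t i) = (d:ℝ)⁻¹ - w/d := by
      simp_rw [mul_one_sub]
      rw [Finset.sum_sub_distrib, hμsum, hμt]; ring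
    have e4 : ∑ i : Fin d, (1 - t i) = (d:ℝ) - 1 := by
      rw [Finset.sum_sub_distrib, htsum]; simp
    rw [e1, e2, e3, e4, Real.sqrt_one, mul_one] at h
    refine h.trans (le_of_eq ?_)
    congr 1
    have hnn : 0 ≤ (d:ℝ)⁻¹ - w/d := by
      have : ∑ i, μ i * (1 - t i) = (d:ℝ)⁻¹ - w/d := e3
      rw [← this]
      exact Finset.sum_nonneg fun i _ => mul_nonneg (hμ0 i) (by linarith [ht1 i])
    rw [← Real.sqrt_mul hnn]
    congr 1
    field_simp
  have hs0 : 0 ≤ ∑ k, Real.sqrt (μ k) := Finset.sum_nonneg fun k _ => Real.sqrt_nonneg _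
  constructor
  · rw [hfid, Real.sqrt_sq hs0]
    exact hkey
  · rw [hfid, h𝒞, sub_sub_cancel]
    have hrhs : 0 ≤ Real.sqrt (w / d) + Real.sqrt ((1 - w) * (1 - 1/(d:ℝ))) :=
      add_nonneg (Real.sqrt_nonneg _) (Real.sqrt_nonneg _)
    exact pow_le_pow_left₀ hs0 hkey 2


end QCE
end

section
/- (Upper bound on exergy from the Jarzynski-like equality, Section III.B) Let ρ_in = Σ_{i=1}^r p_i |p_i⟩⟨p_i| be an input state, Φ a quantum channel, ρ_out = Φ(ρ_in), β > 0, and H an arbitrary Hermitian observable with ΔE_s = Tr[ρ_out H] − Tr[ρ_in H] the internal energy change and ΔS = S(ρ_out) − S(ρ_in) the information production. Then the exergy Δℰ = ΔE_s − β^{−1} ΔS satisfies Δℰ ≤ ΔE_s + β^{−1} ln( Σ_{i=1}^r e^{−C(Φ(|p_i⟩⟨p_i|), ρ_out)} ). -/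
open scoped Kronecker BigOperators ComplexOrder

namespace QCE

variable {ι : Type*} [Fintype ι] [DecidableEq ι]

section Aux

set_option linter.unusedSectionVars false
set_option maxHeartbeats 1000000

variable {r : ℕ} {v : Fin r → ι → ℂ}

lemma outer_trace (hv : OrthonormalFam v) (i : Fin r) : (outer (v i)).trace = 1 := by
  have h := hv i i
  rw [if_pos rfl] at h
  rw [Matrix.trace, ← h]
  congr 1; ext a
  simp [outer, Matrix.vecMulVec_apply, Matrix.diag, mul_comm]

lemma outer_mul_outer (hv : OrthonormalFam v) (i j : Fin r) :
    outer (v i) * outer (v j) = if i = j then outer (v i) else 0 := by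
  have h := hv i j
  ext a b
  simp only [Matrix.mul_apply, outer, Matrix.vecMulVec_apply, Pi.star_apply]
  have heq : ∑ c, v i a * star (v i c) * (v j c * star (v j b))
      = (v i a * star (v j b)) * ∑ c, star (v i c) * v j c := by
    rw [Finset.mul_sum]; congr 1; ext c; ring
  rw [heq, h]
  by_cases hij : i = j
  · subst hij; simp [outer, Matrix.vecMulVec_apply]
  · simp [hij]

/-- product of sums collapses -/
lemma sum_smul_mul_sum_smul (hv : OrthonormalFam v) (c d : Fin r → ℂ) :
    (∑ i, c i • outer (v i)) * (∑ j, d j • outer (v j))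
      = ∑ i, (c i * d i) • outer (v i) := by
  rw [Finset.sum_mul]
  refine Finset.sum_congr rfl fun i _ => ?_
  rw [Finset.mul_sum]
  have : ∀ j, (c i • outer (v i)) * (d j • outer (v j))
      = (c i * d j) • (if i = j then outer (v i) else 0) := by
    intro j
    rw [Matrix.smul_mul, Matrix.mul_smul, outer_mul_outer hv, smul_smul]
  simp_rw [this, smul_ite, smul_zero]
  simp

lemma sum_smul_pow (hv : OrthonormalFam v) (p : Fin r → ℝ) (k : ℕ) :
    (∑ i, (p i : ℂ) • outer (v i)) ^ (k + 1)
      = ∑ i, ((p i : ℂ) ^ (k + 1)) • outer (v i) := by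
  induction k with
  | zero => simp
  | succ k ih =>
    rw [pow_succ, ih, sum_smul_mul_sum_smul hv]
    refine Finset.sum_congr rfl fun i _ => ?_
    rw [← pow_succ]

lemma spectrum_subset (hv : OrthonormalFam v) (p : Fin r → ℝ) {lam : ℝ}
    (hlam : lam ∈ spectrum ℝ (∑ i, (p i : ℂ) • outer (v i))) :
    lam = 0 ∨ ∃ i, lam = p i := by
  by_contra hcon
  push_neg at hcon
  obtain ⟨h0, hne⟩ := hcon
  set A := ∑ i, (p i : ℂ) • outer (v i) with hA
  have h0' : (lam : ℂ) ≠ 0 := by exact_mod_cast h0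
  have hne' : ∀ i, (lam : ℂ) ≠ (p i : ℂ) := fun i => by exact_mod_cast hne i
  -- explicit inverse
  set B : Matrix ι ι ℂ := (lam : ℂ)⁻¹ • 1 +
    ∑ j, ((p j : ℂ) * ((lam : ℂ) * ((lam : ℂ) - (p j : ℂ)))⁻¹) • outer (v j) with hB
  have key : (algebraMap ℝ (Matrix ι ι ℂ) lam - A) * B = 1 := by
    have halg : algebraMap ℝ (Matrix ι ι ℂ) lam = (lam : ℂ) • (1 : Matrix ι ι ℂ) := by
      rw [Algebra.algebraMap_eq_smul_one]
      rw [← algebraMap_smul ℂ lam (1 : Matrix ι ι ℂ)]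
      norm_num
    rw [halg, hB, sub_mul, mul_add, mul_add, Matrix.smul_mul, Matrix.smul_mul, one_mul]
    rw [smul_smul, mul_inv_cancel₀ h0', Finset.mul_sum]
    have hA1 : A * ((lam : ℂ)⁻¹ • (1:Matrix ι ι ℂ)) = ∑ j, ((p j : ℂ) * (lam:ℂ)⁻¹) • outer (v j) := by
      rw [Matrix.mul_smul, mul_one, hA, Finset.smul_sum]
      refine Finset.sum_congr rfl fun j _ => ?_
      rw [smul_smul, mul_comm]
    have hA2 : A * (∑ j, ((p j : ℂ) * ((lam : ℂ) * ((lam : ℂ) - (p j : ℂ)))⁻¹) • outer (v j))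
        = ∑ j, ((p j : ℂ) * ((p j : ℂ) * ((lam : ℂ) * ((lam : ℂ) - (p j : ℂ)))⁻¹)) • outer (v j) := by
      rw [hA, sum_smul_mul_sum_smul hv]
    rw [hA1, hA2]
    have : ∀ j : Fin r, (lam:ℂ) • (((p j : ℂ) * ((lam : ℂ) * ((lam : ℂ) - (p j : ℂ)))⁻¹) • outer (v j))
        - ((p j : ℂ) * (lam:ℂ)⁻¹) • outer (v j)
        - ((p j : ℂ) * ((p j : ℂ) * ((lam : ℂ) * ((lam : ℂ) - (p j : ℂ)))⁻¹)) • outer (v j) = 0 := by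
      intro j
      rw [smul_smul, ← sub_smul, ← sub_smul]
      convert zero_smul ℂ (outer (v j))
      have hsub : (lam : ℂ) - (p j : ℂ) ≠ 0 := sub_ne_zero.mpr (hne' j)
      field_simp
      ring
    rw [one_smul, Finset.smul_sum]
    have hz : (∑ j, ((lam:ℂ) • (((p j : ℂ) * ((lam : ℂ) * ((lam : ℂ) - (p j : ℂ)))⁻¹) • outer (v j))
        - (((p j : ℂ) * (lam:ℂ)⁻¹) • outer (v j)
          + ((p j : ℂ) * ((p j : ℂ) * ((lam : ℂ) * ((lam : ℂ) - (p j : ℂ)))⁻¹)) • outer (v j)))) = 0 := by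
      refine Finset.sum_eq_zero fun j _ => ?_
      have := this j
      rw [sub_sub] at this
      exact this
    rw [Finset.sum_sub_distrib, Finset.sum_add_distrib] at hz
    simp only [one_mul]
    rw [add_sub_assoc, hz, add_zero]
  exact (spectrum.notMem_iff.mpr ((Matrix.isUnit_iff_isUnit_det _).2 (Matrix.isUnit_det_of_right_inverse key))).elim hlam

lemma isHermitian_sum (p : Fin r → ℝ) :
    (∑ i, (p i : ℂ) • outer (v i)).IsHermitian := by
  show Matrix.conjTranspose _ = _
  rw [Matrix.conjTranspose_sum]
  refine Finset.sum_congr rfl fun i _ => ?_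
  rw [Matrix.conjTranspose_smul]
  congr 1
  · norm_num
  · ext a b; simp [outer, Matrix.vecMulVec_apply, mul_comm]

lemma aeval_formula (hv : OrthonormalFam v) (p : Fin r → ℝ) (q : Polynomial ℝ) :
    Polynomial.aeval (∑ i, (p i : ℂ) • outer (v i)) q
      = ((q.eval 0 : ℝ) : ℂ) • ((1 : Matrix ι ι ℂ) - ∑ i, outer (v i))
        + ∑ i, ((q.eval (p i) : ℝ) : ℂ) • outer (v i) := by
  induction q using Polynomial.induction_on' with
  | add f g hf hg =>
    rw [map_add, hf, hg]
    simp only [Polynomial.eval_add, Complex.ofReal_add, add_smul, Finset.sum_add_distrib]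
    abel
  | monomial k a =>
    rw [Polynomial.aeval_monomial, ← Algebra.smul_def,
      ← algebraMap_smul ℂ a (((∑ i, (p i : ℂ) • outer (v i))) ^ k), Complex.coe_algebraMap]
    cases k with
    | zero =>
      simp only [pow_zero, Polynomial.eval_monomial, pow_zero, mul_one]
      rw [smul_sub, Finset.smul_sum]
      abel
    | succ k =>
      rw [sum_smul_pow hv p k]
      simp only [Polynomial.eval_monomial, ne_eq, Nat.succ_ne_zero, not_false_iff,
        zero_pow, mul_zero, Complex.ofReal_zero, zero_smul, zero_add]
      rw [Finset.smul_sum]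
      refine Finset.sum_congr rfl fun i _ => ?_
      rw [smul_smul]
      push_cast
      ring_nf

lemma matLog_sum (hv : OrthonormalFam v) (p : Fin r → ℝ) :
    matLog (∑ i, (p i : ℂ) • outer (v i))
      = ∑ i, ((Real.log (p i) : ℝ) : ℂ) • outer (v i) := by
  have hA : (∑ i, (p i : ℂ) • outer (v i)).IsHermitian := isHermitian_sum p
  rw [matLog, matFun, dif_pos hA, ← hA.cfc_eq]
  set A := ∑ i, (p i : ℂ) • outer (v i) with hAdef
  set s : Finset ℝ := insert 0 (Finset.image p Finset.univ) with hs
  set q := Lagrange.interpolate s id Real.log with hq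
  have hinj : Set.InjOn id (s : Set ℝ) := Function.injective_id.injOn
  have hnode : ∀ x ∈ s, Polynomial.eval x q = Real.log x := fun x hx => by
    simpa [hq] using Lagrange.eval_interpolate_at_node (v := id) (r := Real.log) hinj hx
  have hSA : IsSelfAdjoint A := hA
  have hcongr : (spectrum ℝ A).EqOn Real.log (fun x => Polynomial.eval x q) := by
    intro x hx
    have hxs : x ∈ s := by
      rcases spectrum_subset hv p hx with h0 | ⟨i, hi⟩
      · simp [hs, h0]
      · simp only [hs, Finset.mem_insert, Finset.mem_image]
        exact Or.inr ⟨i, Finset.mem_univ i, hi.symm⟩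
    exact (hnode x hxs).symm
  rw [cfc_congr hcongr, cfc_polynomial q A hSA, aeval_formula hv p q]
  have h0 : Polynomial.eval 0 q = 0 := by
    rw [hnode 0 (Finset.mem_insert_self 0 _), Real.log_zero]
  have hpi : ∀ i : Fin r, Polynomial.eval (p i) q = Real.log (p i) := fun i =>
    hnode (p i) (by simp only [hs, Finset.mem_insert, Finset.mem_image]; exact Or.inr ⟨i, Finset.mem_univ i, rfl⟩)
  rw [h0]
  simp only [Complex.ofReal_zero, zero_smul, zero_add]
  exact Finset.sum_congr rfl fun i _ => by rw [hpi i]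

lemma vnEntropy_sum (hv : OrthonormalFam v) (p : Fin r → ℝ) :
    vnEntropy (∑ i, (p i : ℂ) • outer (v i)) = -∑ i, p i * Real.log (p i) := by
  rw [vnEntropy, crossEnt, matLog_sum hv p, sum_smul_mul_sum_smul hv]
  have htr : (∑ i, ((p i : ℂ) * ((Real.log (p i) : ℝ) : ℂ)) • outer (v i)).trace
      = ∑ i, ((p i * Real.log (p i) : ℝ) : ℂ) := by
    rw [Matrix.trace_sum]
    refine Finset.sum_congr rfl fun i _ => ?_
    rw [Matrix.trace_smul, outer_trace hv i, smul_eq_mul, mul_one]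
    push_cast
    ring
  rw [htr]
  rw [← Complex.ofReal_sum]
  rw [Complex.ofReal_re]

end Aux

/-- **Section III.B** (Upper bound on exergy from the Jarzynski-like equality).
The exergy `Δℰ = ΔE_s - β⁻¹ ΔS` satisfies
`Δℰ ≤ ΔE_s + β⁻¹ ln(∑ i, e^{-C(Φ(|pᵢ⟩⟨pᵢ|), ρout)})`. -/
theorem exergy_upper_bound
    {n r : ℕ}
    (Φ : Matrix (Fin n) (Fin n) ℂ →ₗ[ℂ] Matrix (Fin n) (Fin n) ℂ) (hΦ : IsCPTP Φ)
    (p : Fin r → ℝ) (hp : ∀ i, 0 < p i) (hp1 : ∑ i, p i = 1)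
    (v : Fin r → Fin n → ℂ) (hv : OrthonormalFam v)
    (ρin : Matrix (Fin n) (Fin n) ℂ) (hρin : ρin = ∑ i, (p i : ℂ) • outer (v i))
    (ρout : Matrix (Fin n) (Fin n) ℂ) (hρout : ρout = Φ ρin)
    (H : Matrix (Fin n) (Fin n) ℂ) (hH : H.IsHermitian)
    (β : ℝ) (hβ : 0 < β)
    (ΔEs : ℝ) (hΔEs : ΔEs = (ρout * H).trace.re - (ρin * H).trace.re)
    (Δℰ : ℝ) (hΔℰ : Δℰ = ΔEs - β⁻¹ * (vnEntropy ρout - vnEntropy ρin)) :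
    Δℰ ≤ ΔEs + β⁻¹ * Real.log (∑ i, Real.exp (-(crossEnt (Φ (outer (v i))) ρout))) := by
  classical
  -- the cross entropies
  set C : Fin r → ℝ := fun i => crossEnt (Φ (outer (v i))) ρout with hC
  -- entropy of the input state
  have hSin : vnEntropy ρin = -∑ i, p i * Real.log (p i) := by
    rw [hρin]; exact vnEntropy_sum hv p
  -- output state as a convex combination
  have hρo : ρout = ∑ i, (p i : ℂ) • Φ (outer (v i)) := by
    rw [hρout, hρin, map_sum]
    exact Finset.sum_congr rfl fun i _ => by rw [LinearMap.map_smul]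
  -- entropy of the output state via linearity
  have hSout : vnEntropy ρout = ∑ i, p i * C i := by
    rw [vnEntropy]
    simp only [crossEnt, hC]
    obtain ⟨L, hL⟩ : ∃ L, matLog ρout = L := ⟨_, rfl⟩
    rw [hL]
    conv_lhs => rw [hρo]
    rw [Finset.sum_mul, Matrix.trace_sum]
    rw [Complex.re_sum]
    rw [← Finset.sum_neg_distrib]
    refine Finset.sum_congr rfl fun i _ => ?_
    rw [Matrix.smul_mul, Matrix.trace_smul, smul_eq_mul]
    have : ((p i : ℂ) * (Φ (outer (v i)) * L).trace).re
        = p i * ((Φ (outer (v i)) * L).trace).re := by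
      rw [Complex.mul_re, Complex.ofReal_re, Complex.ofReal_im]
      ring
    rw [this]
    ring
  -- Jensen / Gibbs inequality
  have key : vnEntropy ρin - vnEntropy ρout ≤ Real.log (∑ i, Real.exp (-(C i))) := by
    rw [hSin, hSout]
    have hcc : ConcaveOn ℝ (Set.Ioi (0:ℝ)) Real.log := strictConcaveOn_log_Ioi.concaveOn
    have jensen := hcc.le_map_sum (t := Finset.univ) (w := p)
      (p := fun i => Real.exp (-(C i)) / p i)
      (fun i _ => (hp i).le) (by simpa using hp1)
      (fun i _ => Set.mem_Ioi.mpr (div_pos (Real.exp_pos _) (hp i)))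
    have hxsum : (∑ i, p i • (Real.exp (-(C i)) / p i)) = ∑ i, Real.exp (-(C i)) := by
      refine Finset.sum_congr rfl fun i _ => ?_
      rw [smul_eq_mul, mul_div_cancel₀ _ (hp i).ne']
    have hlogx : ∀ i, Real.log (Real.exp (-(C i)) / p i) = -(C i) - Real.log (p i) := by
      intro i
      rw [Real.log_div (Real.exp_ne_zero _) (hp i).ne', Real.log_exp]
    rw [hxsum] at jensen
    calc -∑ i, p i * Real.log (p i) - ∑ i, p i * C i
        = ∑ i, p i • Real.log (Real.exp (-(C i)) / p i) := by
          simp only [smul_eq_mul, hlogx]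
          have hterm : ∀ i : Fin r, p i * (-C i - Real.log (p i))
              = -(p i * Real.log (p i)) - p i * C i := fun i => by ring
          simp_rw [hterm]
          rw [Finset.sum_sub_distrib, Finset.sum_neg_distrib]
      _ ≤ Real.log (∑ i, Real.exp (-(C i))) := jensen
  -- conclude
  have hβ' : (0:ℝ) ≤ β⁻¹ := (inv_pos.mpr hβ).le
  have hmul := mul_le_mul_of_nonneg_left key hβ'
  rw [hΔℰ]
  simp only [hC] at hmul ⊢
  nlinarith [hmul]


end QCE
end
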